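/- Let V be a standard value-function candidate. If −p/α ≤ x₀ < x₁, (x₀, x₁] ⊆ B and x₀ ∉ B, then x₀ ∈ A. -/

import Mathlib

open MeasureTheory Set Filter

noncomputable section

/-- Drift coefficient: c(x) = p + r x for x ≥ 0, c(x) = p + α x for x < 0. -/
def drift (p r a x : ℝ) : ℝ := if 0 ≤ x then p + r * x else p + a * x

/-- I_v(x) = ∫_{(0, x+p/α]} v(x−u) dμ(u). -/
def Iop (p a : ℝ) (mu : Measure ℝ) (v : ℝ → ℝ) (x : ℝ) : ℝ :=
  ∫ u in Set.Ioc (0 : ℝ) (x + p / a), v (x - u) ∂mu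

/-- L_{v,φ}(x) = c(x)·φ′(x) − (λ+δ)·v(x) + λ·I_v(x). -/
def Lphi (p lam d r a : ℝ) (mu : Measure ℝ) (v phi : ℝ → ℝ) (x : ℝ) : ℝ :=
  drift p r a x * deriv phi x - (lam + d) * v x + lam * Iop p a mu v x

/-- G_v(x) = c(x) − (λ+δ)·v(x) + λ·I_v(x). -/
def Gop (p lam d r a : ℝ) (mu : Measure ℝ) (v : ℝ → ℝ) (x : ℝ) : ℝ :=
  drift p r a x - (lam + d) * v x + lam * Iop p a mu v x

/-- Viscosity sub-solution of the HJB equation on J ⊆ (−p/α,∞). -/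
def IsViscSubsol (p lam d r a : ℝ) (mu : Measure ℝ) (u : ℝ → ℝ) (J : Set ℝ) : Prop :=
  ∀ x ∈ J, ∀ phi : ℝ → ℝ, ContDiff ℝ 1 phi → phi x = u x →
    (∀ y ∈ Set.Ici (-(p / a)), u y - phi y ≤ u x - phi x) →
    0 ≤ max (1 - deriv phi x) (Lphi p lam d r a mu u phi x)

/-- Viscosity super-solution of the HJB equation on J ⊆ (−p/α,∞). -/
def IsViscSupersol (p lam d r a : ℝ) (mu : Measure ℝ) (u : ℝ → ℝ) (J : Set ℝ) : Prop :=
  ∀ x ∈ J, ∀ phi : ℝ → ℝ, ContDiff ℝ 1 phi → phi x = u x →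
    (∀ y ∈ Set.Ici (-(p / a)), u x - phi x ≤ u y - phi y) →
    max (1 - deriv phi x) (Lphi p lam d r a mu u phi x) ≤ 0

/-- Viscosity solution: both sub- and super-solution. -/
def IsViscSol (p lam d r a : ℝ) (mu : Measure ℝ) (u : ℝ → ℝ) (J : Set ℝ) : Prop :=
  IsViscSubsol p lam d r a mu u J ∧ IsViscSupersol p lam d r a mu u J

/-- Locally Lipschitz on a set. -/
def LocLipOn (s : Set ℝ) (u : ℝ → ℝ) : Prop :=
  ∀ x ∈ s, ∃ K : NNReal, ∃ eps : ℝ, 0 < eps ∧ LipschitzOnWith K u (s ∩ Metric.ball x eps)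

/-- Linear growth bound on [−p/α,∞). -/
def LinGrowth (p a : ℝ) (u : ℝ → ℝ) : Prop :=
  ∃ c₁ c₂ : ℝ, ∀ x : ℝ, -(p / a) ≤ x → u x ≤ c₁ * x + c₂

/-- Standard value-function candidate. -/
structure IsCandidate (p lam d r a : ℝ) (mu : Measure ℝ) (V : ℝ → ℝ) : Prop where
  cont : ContinuousOn V (Set.Ici (-(p / a)))
  nonneg : ∀ x ∈ Set.Ici (-(p / a)), 0 ≤ V x
  mono : MonotoneOn V (Set.Ici (-(p / a)))
  boundary : V (-(p / a)) = 0
  slope : ∀ x y : ℝ, -(p / a) ≤ x → x ≤ y → y - x ≤ V y - V x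
  growth : ∀ x : ℝ, 0 ≤ x → V x ≤ (d * x + p) / (d - r) + p / a
  locLip : LocLipOn (Set.Ioi (-(p / a))) V
  visc : IsViscSol p lam d r a mu V (Set.Ioi (-(p / a)))
  derivLim : ∀ x ∈ Set.Ioi (-(p / a)), ∀ (h : ℕ → ℝ) (dd : ℝ),
      ((∀ n, 0 < h n) ∨ (∀ n, h n < 0)) →
      Filter.Tendsto h Filter.atTop (nhds 0) →
      Filter.Tendsto (fun n => (V (x + h n) - V x) / h n) Filter.atTop (nhds dd) →
      1 ≤ dd ∧ dd * drift p r a x - (lam + d) * V x + lam * Iop p a mu V x ≤ 0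

/-- The set A = {x ∈ [−p/α,∞) : G_V(x) = 0}. -/
def setA (p lam d r a : ℝ) (mu : Measure ℝ) (V : ℝ → ℝ) : Set ℝ :=
  {x | x ∈ Set.Ici (-(p / a)) ∧ Gop p lam d r a mu V x = 0}

/-- The set B = {x ∈ [−p/α,∞) : V′(x) exists, V′(x) = 1 and G_V(x) < 0}. -/
def setB (p lam d r a : ℝ) (mu : Measure ℝ) (V : ℝ → ℝ) : Set ℝ :=
  {x | x ∈ Set.Ici (-(p / a)) ∧ DifferentiableAt ℝ V x ∧ deriv V x = 1 ∧
      Gop p lam d r a mu V x < 0}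

/-- The set C = [−p/α,∞) \ (A ∪ B). -/
def setC (p lam d r a : ℝ) (mu : Measure ℝ) (V : ℝ → ℝ) : Set ℝ :=
  Set.Ici (-(p / a)) \ (setA p lam d r a mu V ∪ setB p lam d r a mu V)

lemma hasDerivAt_reluSq (z : ℝ) : HasDerivAt (fun t : ℝ => max t 0 ^ 2) (2 * max z 0) z := by
  rcases lt_trichotomy z 0 with hz | hz | hz
  · have h0 : HasDerivAt (fun _ : ℝ => (0:ℝ)) (2 * max z 0) z := by
      simpa [max_eq_right hz.le] using hasDerivAt_const z (0:ℝ)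
    refine h0.congr_of_eventuallyEq ?_
    filter_upwards [Iio_mem_nhds hz] with t ht
    simp [max_eq_right (le_of_lt (mem_Iio.mp ht))]
  · subst hz
    rw [hasDerivAt_iff_tendsto_slope]
    have hsq : ∀ t : ℝ, |slope (fun t : ℝ => max t 0 ^ 2) 0 t| ≤ |t| := by
      intro t
      rw [slope_def_field]
      rcases le_or_gt t 0 with ht | ht
      · simp [max_eq_right ht]
      · rw [max_eq_left ht.le]
        have h2 : t ^ 2 / t = t := by field_simp
        simp [h2]
    have habs : Tendsto (fun t : ℝ => |t|) (nhdsWithin 0 {(0:ℝ)}ᶜ) (nhds 0) := by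
      have := (continuous_abs.tendsto (0:ℝ)).mono_left (nhdsWithin_le_nhds (s := {(0:ℝ)}ᶜ))
      simpa using this
    have h := squeeze_zero_norm (f := slope (fun t : ℝ => max t 0 ^ 2) 0) (a := abs)
      (fun t => by simpa [Real.norm_eq_abs] using hsq t) habs
    simpa using h
  · have h0 : HasDerivAt (fun t : ℝ => t ^ 2) (2 * max z 0) z := by
      have := hasDerivAt_pow 2 z
      simpa [max_eq_left hz.le, mul_comm] using this
    refine h0.congr_of_eventuallyEq ?_
    filter_upwards [Ioi_mem_nhds hz] with t ht
    simp [max_eq_left (le_of_lt (mem_Ioi.mp ht))]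

lemma contDiff_reluSq : ContDiff ℝ 1 (fun t : ℝ => max t 0 ^ 2) := by
  rw [contDiff_one_iff_deriv]
  constructor
  · exact fun z => (hasDerivAt_reluSq z).differentiableAt
  · have : deriv (fun t : ℝ => max t 0 ^ 2) = fun z => 2 * max z 0 := by
      funext z; exact (hasDerivAt_reluSq z).deriv
    rw [this]
    exact continuous_const.mul (continuous_id.max continuous_const)

lemma drift_mono (p r a : ℝ) (hr : 0 < r) (ha : 0 < a) : Monotone (drift p r a) := by
  intro x y hxy
  unfold drift
  rcases le_or_gt 0 x with hx | hx
  · rw [if_pos hx, if_pos (hx.trans hxy)]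
    nlinarith
  · rw [if_neg (not_le.mpr hx)]
    rcases le_or_gt 0 y with hy | hy
    · rw [if_pos hy]; nlinarith
    · rw [if_neg (not_le.mpr hy)]; nlinarith

lemma drift_pos (p r a : ℝ) (hp : 0 < p) (hr : 0 < r) (ha : 0 < a) {x : ℝ}
    (hx : -(p / a) < x) : 0 < drift p r a x := by
  unfold drift
  rcases le_or_gt 0 x with h | h
  · rw [if_pos h]; nlinarith
  · rw [if_neg (not_le.mpr h)]
    have h1 : a * (-(p/a)) < a * x := mul_lt_mul_of_pos_left hx ha
    have h2 : a * (p/a) = p := by field_simp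
    nlinarith
lemma integrableOn_Vshift (p lam d r a : ℝ) (ha : 0 < a)
    (mu : Measure ℝ) [IsProbabilityMeasure mu]
    (V : ℝ → ℝ) (hV : IsCandidate p lam d r a mu V)
    {z : ℝ} (hz : -(p / a) ≤ z) :
    IntegrableOn (fun u => V (z - u)) (Set.Ioc (0:ℝ) (z + p / a)) mu := by
  have hmaps : ∀ u ∈ Set.Ioc (0:ℝ) (z + p / a), z - u ∈ Set.Ici (-(p / a)) := by
    intro u hu
    have := hu.2
    simp only [Set.mem_Ici]
    linarith
  have hcont : ContinuousOn (fun u => V (z - u)) (Set.Ioc (0:ℝ) (z + p / a)) :=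
    hV.cont.comp ((continuous_const.sub continuous_id).continuousOn) hmaps
  have hmeas : AEStronglyMeasurable (fun u => V (z - u)) (mu.restrict (Set.Ioc (0:ℝ) (z + p / a))) :=
    hcont.aestronglyMeasurable measurableSet_Ioc
  refine Integrable.mono' (integrable_const (V z)) hmeas ?_
  rw [ae_restrict_iff' measurableSet_Ioc]
  refine ae_of_all _ (fun u hu => ?_)
  have h1 : z - u ∈ Set.Ici (-(p / a)) := hmaps u hu
  have h2 : V (z - u) ≤ V z := hV.mono h1 (Set.mem_Ici.mpr hz) (by linarith [hu.1])
  have h3 : 0 ≤ V (z - u) := hV.nonneg _ h1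
  rw [Real.norm_eq_abs, abs_of_nonneg h3]
  exact h2

lemma Iop_mono (p lam d r a : ℝ) (ha : 0 < a)
    (mu : Measure ℝ) [IsProbabilityMeasure mu]
    (V : ℝ → ℝ) (hV : IsCandidate p lam d r a mu V)
    {z z' : ℝ} (hz : -(p / a) ≤ z) (hzz' : z ≤ z') :
    Iop p a mu V z ≤ Iop p a mu V z' := by
  have hz' : -(p/a) ≤ z' := hz.trans hzz'
  unfold Iop
  have step1 : ∫ u in Set.Ioc (0:ℝ) (z + p/a), V (z - u) ∂mu
      ≤ ∫ u in Set.Ioc (0:ℝ) (z + p/a), V (z' - u) ∂mu := by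
    refine setIntegral_mono_on (integrableOn_Vshift p lam d r a ha mu V hV hz)
      ((integrableOn_Vshift p lam d r a ha mu V hV hz').mono_set ?_) measurableSet_Ioc
      (fun u hu => ?_)
    · exact Set.Ioc_subset_Ioc le_rfl (by linarith)
    · refine hV.mono ?_ ?_ (by linarith)
      · simp only [Set.mem_Ici]; linarith [hu.2]
      · simp only [Set.mem_Ici]; linarith [hu.2]
  have step2 : ∫ u in Set.Ioc (0:ℝ) (z + p/a), V (z' - u) ∂mu
      ≤ ∫ u in Set.Ioc (0:ℝ) (z' + p/a), V (z' - u) ∂mu := by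
    refine setIntegral_mono_set (integrableOn_Vshift p lam d r a ha mu V hV hz') ?_ ?_
    · rw [Filter.EventuallyLE, ae_restrict_iff' measurableSet_Ioc]
      refine ae_of_all _ (fun u hu => ?_)
      exact hV.nonneg _ (by simp only [Set.mem_Ici]; linarith [hu.2])
    · exact HasSubset.Subset.eventuallyLE (Set.Ioc_subset_Ioc le_rfl (by linarith))
  linarith
set_option maxHeartbeats 1600000

theorem stmt16
    (p lam d r a : ℝ) (hp : 0 < p) (hlam : 0 < lam) (hd : 0 < d)
    (hr : 0 < r) (hra : r < a) (hrd : r < d)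
    (mu : Measure ℝ) [IsProbabilityMeasure mu] (hmu : mu (Set.Iic 0) = 0)
    (V : ℝ → ℝ) (hV : IsCandidate p lam d r a mu V)
    (x₀ x₁ : ℝ) (hx₀ : -(p / a) ≤ x₀) (hlt : x₀ < x₁)
    (hB : Set.Ioc x₀ x₁ ⊆ setB p lam d r a mu V)
    (hnB : x₀ ∉ setB p lam d r a mu V) :
    x₀ ∈ setA p lam d r a mu V := by
  have ha : 0 < a := hr.trans hra
  have hpa : 0 < p / a := div_pos hp ha
  rcases eq_or_lt_of_le hx₀ with hbd | hx₀'
  · -- boundary case x₀ = -(p/a)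
    refine ⟨hx₀, ?_⟩
    have hx0 : x₀ = -(p/a) := hbd.symm
    subst hx0
    have hV0 : V (-(p/a)) = 0 := hV.boundary
    have hI : Iop p a mu V (-(p/a)) = 0 := by
      unfold Iop
      rw [show -(p/a) + p/a = (0:ℝ) by ring]
      simp
    have hdrift : drift p r a (-(p/a)) = 0 := by
      unfold drift
      rw [if_neg (not_le.mpr (by linarith))]
      have hane : a ≠ 0 := ne_of_gt (hr.trans hra)
      field_simp
      ring
    unfold Gop
    rw [hdrift, hV0, hI]; ring
  -- main case : -(p/a) < x₀
  -- Step 1 : linearity of V on (x₀, x₁]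
  have hlin1 : ∀ s ∈ Set.Ioc x₀ x₁, ∀ z ∈ Set.Icc s x₁, V z = V s + (z - s) := by
    intro s hs z hz
    have derivf : ∀ t ∈ Set.Ico s x₁, HasDerivWithinAt V ((fun _ => (1:ℝ)) t) (Set.Ici t) t := by
      intro t ht
      obtain ⟨-, hdiff, hder, -⟩ := hB ⟨lt_of_lt_of_le hs.1 ht.1, le_of_lt ht.2⟩
      have h1 := hdiff.hasDerivAt
      rw [hder] at h1
      exact h1.hasDerivWithinAt
    have derivg : ∀ t ∈ Set.Ico s x₁,
        HasDerivWithinAt (fun u => V s + (u - s)) ((fun _ => (1:ℝ)) t) (Set.Ici t) t :=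
      fun t _ => (((hasDerivAt_id t).sub_const s).const_add (V s)).hasDerivWithinAt
    have fcont : ContinuousOn V (Set.Icc s x₁) := by
      intro t ht
      obtain ⟨-, hdiff, -, -⟩ := hB ⟨lt_of_lt_of_le hs.1 ht.1, ht.2⟩
      exact hdiff.continuousAt.continuousWithinAt
    have gcont : ContinuousOn (fun u => V s + (u - s)) (Set.Icc s x₁) :=
      (continuous_const.add (continuous_id.sub continuous_const)).continuousOn
    have hi : V s = V s + (s - s) := by ring
    exact eq_of_has_deriv_right_eq derivf derivg fcont gcont hi z hz
  have hV1 : ∀ z ∈ Set.Ioc x₀ x₁, V z = V x₀ + (z - x₀) := by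
    have hVx₁ : V x₀ = V x₁ - (x₁ - x₀) := by
      have h1 : Tendsto V (nhdsWithin x₀ (Set.Ioi x₀)) (nhds (V x₀)) :=
        (hV.cont x₀ hx₀).mono_left
          (nhdsWithin_mono x₀ (fun t ht => le_trans hx₀ (le_of_lt ht)))
      have h2 : Tendsto (fun s => V x₁ - (x₁ - s)) (nhdsWithin x₀ (Set.Ioi x₀))
          (nhds (V x₁ - (x₁ - x₀))) := by
        refine Tendsto.mono_left ?_ nhdsWithin_le_nhds
        exact (Continuous.tendsto (by continuity) x₀)
      have hev : V =ᶠ[nhdsWithin x₀ (Set.Ioi x₀)] (fun s => V x₁ - (x₁ - s)) := by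
        filter_upwards [Ioc_mem_nhdsGT_of_mem (Set.mem_Ico.mpr ⟨le_refl x₀, hlt⟩)] with s hs
        have := hlin1 s hs x₁ (Set.mem_Icc.mpr ⟨hs.2, le_refl x₁⟩)
        linarith
      exact tendsto_nhds_unique (h1.congr' hev) h2
    intro z hz
    have := hlin1 z hz x₁ ⟨hz.2, le_refl x₁⟩
    linarith
  -- Step 2 : Gop x₀ ≤ 0
  have hG_le : Gop p lam d r a mu V x₀ ≤ 0 := by
    have hpos : ∀ n : ℕ, 0 < (x₁ - x₀) / ((n : ℝ) + 1) := by
      intro n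
      apply div_pos (by linarith)
      positivity
    have hto0 : Tendsto (fun n : ℕ => (x₁ - x₀) / ((n : ℝ) + 1)) atTop (nhds 0) := by
      have := tendsto_one_div_add_atTop_nhds_zero_nat.const_mul (x₁ - x₀)
      simpa [div_eq_mul_inv] using this
    have hq : ∀ n : ℕ, (V (x₀ + (x₁ - x₀) / ((n : ℝ) + 1)) - V x₀) / ((x₁ - x₀) / ((n : ℝ) + 1)) = 1 := by
      intro n
      have h1 : (0:ℝ) < (n : ℝ) + 1 := by positivity
      have hle : (x₁ - x₀) / ((n : ℝ) + 1) ≤ x₁ - x₀ :=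
        div_le_self (by linarith) (by linarith [Nat.cast_nonneg (α := ℝ) n])
      have hmem : x₀ + (x₁ - x₀) / ((n : ℝ) + 1) ∈ Set.Ioc x₀ x₁ :=
        ⟨by linarith [hpos n], by linarith⟩
      rw [hV1 _ hmem]
      rw [show V x₀ + (x₀ + (x₁ - x₀) / ((n : ℝ) + 1) - x₀) - V x₀ = (x₁ - x₀) / ((n : ℝ) + 1) by ring]
      exact div_self (ne_of_gt (hpos n))
    have hqt : Tendsto (fun n : ℕ => (V (x₀ + (x₁ - x₀) / ((n : ℝ) + 1)) - V x₀) /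
        ((x₁ - x₀) / ((n : ℝ) + 1))) atTop (nhds 1) :=
      tendsto_const_nhds.congr (fun n => (hq n).symm)
    obtain ⟨-, hineq⟩ := hV.derivLim x₀ (Set.mem_Ioi.mpr hx₀')
      (fun n : ℕ => (x₁ - x₀) / ((n : ℝ) + 1)) 1 (Or.inl hpos) hto0 hqt
    unfold Gop
    linarith [hineq, one_mul (drift p r a x₀)]
  rcases lt_or_eq_of_le hG_le with hGneg | hG0
  swap
  · exact ⟨hx₀, hG0⟩
  exfalso
  have hGdef : Gop p lam d r a mu V x₀ =
      drift p r a x₀ - (lam + d) * V x₀ + lam * Iop p a mu V x₀ := rfl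
  have hc₀pos : 0 < drift p r a x₀ := drift_pos p r a hp hr ha hx₀'
  have hld : 0 < lam + d := by linarith
  -- the key claim
  have claim : ∀ k : ℝ, 1 < k →
      k * drift p r a x₀ - (lam + d) * V x₀ + lam * Iop p a mu V x₀ < 0 →
      ∀ᶠ z in nhdsWithin x₀ (Set.Iio x₀), V x₀ - V z ≤ k * (x₀ - z) := by
    intro k hk1 hkL
    by_contra hcon
    rw [Filter.not_eventually] at hcon
    set ζ := -(k * drift p r a x₀ - (lam + d) * V x₀ + lam * Iop p a mu V x₀) with hζdef
    clear_value ζ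
    have hζpos : 0 < ζ := by rw [hζdef]; linarith
    obtain ⟨ρ, hρpos, hρ⟩ := Metric.continuousWithinAt_iff.mp (hV.cont x₀ hx₀)
      (ζ / (lam + d)) (by positivity)
    have hLlt : max (x₀ - ρ/2) ((x₀ + -(p/a))/2) < x₀ := max_lt (by linarith) (by linarith)
    have hLgt : -(p/a) < max (x₀ - ρ/2) ((x₀ + -(p/a))/2) :=
      lt_of_lt_of_le (by linarith) (le_max_right _ _)
    have hmemIoo : ∀ᶠ z in nhdsWithin x₀ (Set.Iio x₀),
        z ∈ Set.Ioo (max (x₀ - ρ/2) ((x₀ + -(p/a))/2)) x₀ := by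
      have h1 : ∀ᶠ z in nhdsWithin x₀ (Set.Iio x₀), max (x₀ - ρ/2) ((x₀ + -(p/a))/2) < z :=
        (eventually_gt_nhds hLlt).filter_mono nhdsWithin_le_nhds
      have h2 : ∀ᶠ z in nhdsWithin x₀ (Set.Iio x₀), z ∈ Set.Iio x₀ :=
        Filter.eventually_of_mem self_mem_nhdsWithin (fun z hz => hz)
      filter_upwards [h1, h2] with z hz1 hz2
      exact ⟨hz1, hz2⟩
    obtain ⟨y, hny, hyIoo⟩ := (hcon.and_eventually hmemIoo).exists
    push_neg at hny
    have hyx₀ : y < x₀ := hyIoo.2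
    have hyIci : -(p/a) ≤ y := le_of_lt (lt_trans hLgt hyIoo.1)
    have hyρ : x₀ - y < ρ := by
      have h3 : x₀ - ρ/2 ≤ max (x₀ - ρ/2) ((x₀ + -(p/a))/2) := le_max_left _ _
      have := hyIoo.1
      linarith
    -- maximum of w = V - k·id on [y, x₀]
    have hwc : ContinuousOn (fun t => V t - k * t) (Set.Icc y x₀) := by
      refine ContinuousOn.sub (hV.cont.mono ?_) (continuous_const.mul continuous_id).continuousOn
      intro t ht
      exact le_trans hyIci ht.1
    obtain ⟨zs, hzsmem, hzsmax'⟩ := isCompact_Icc.exists_isMaxOn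
      (Set.nonempty_Icc.mpr (le_of_lt hyx₀)) hwc
    have hwmax : ∀ t ∈ Set.Icc y x₀, V t - k * t ≤ V zs - k * zs := fun t ht => hzsmax' ht
    have hηpos : 0 < (V x₀ - k * x₀) - (V y - k * y) := by
      have hexp : k * (x₀ - y) = k * x₀ - k * y := by ring
      linarith
    have hwyz : (V y - k * y) + ((V x₀ - k * x₀) - (V y - k * y)) ≤ V zs - k * zs := by
      have h1 := hwmax x₀ ⟨le_of_lt hyx₀, le_refl x₀⟩
      linarith
    have hyzs : y < zs := by
      rcases eq_or_lt_of_le hzsmem.1 with h | h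
      · exfalso
        rw [← h] at hwyz
        linarith
      · exact h
    have hzsx₀ : zs ≤ x₀ := hzsmem.2
    have hzsIci : -(p/a) ≤ zs := le_trans hyIci (le_of_lt hyzs)
    have hzsIoi : -(p/a) < zs := lt_of_le_of_lt hyIci hyzs
    have hVx₀A : V x₀ ≤ (V zs - k * zs) + k * x₀ := by
      have := hwmax x₀ ⟨le_of_lt hyx₀, le_refl x₀⟩
      linarith
    -- constants
    set η := (V x₀ - k * x₀) - (V y - k * y) with hηdef
    clear_value η
    set A := V zs - k * zs with hAdef
    clear_value A
    have hηne : η ≠ 0 := by intro h; rw [h] at hηpos; exact lt_irrefl 0 hηpos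
    set N := (k - 1)^2 / (4 * η) + 1 with hNdef
    clear_value N
    have hNpos : 0 < N := by
      rw [hNdef]
      have h1 : 0 ≤ (k-1)^2 / (4*η) := div_nonneg (sq_nonneg _) (by linarith)
      linarith
    have h4ηN : 4 * η * N = (k-1)^2 + 4*η := by
      rw [hNdef]; field_simp
    set c1 := max (d / (d - r)) 0 with hc1def
    clear_value c1
    have hdr : 0 < d - r := by linarith
    have hc1le : d / (d - r) ≤ c1 := by rw [hc1def]; exact le_max_left _ _
    have hc1nn : 0 ≤ c1 := by rw [hc1def]; exact le_max_right _ _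
    set c2 := p/(d - r) + p/a + c1 * (p/a) with hc2def
    clear_value c2
    have hlinbd : ∀ t, -(p/a) ≤ t → V t ≤ c1 * t + c2 := by
      intro t ht
      rcases le_or_gt 0 t with h0 | h0
      · have hg := hV.growth t h0
        have he : (d * t + p)/(d - r) = (d/(d-r)) * t + p/(d-r) := by
          field_simp
        have h1 : (d/(d-r)) * t ≤ c1 * t := mul_le_mul_of_nonneg_right hc1le h0
        have h2 : 0 ≤ c1 * (p/a) := mul_nonneg hc1nn (le_of_lt hpa)
        rw [he] at hg
        rw [hc2def]
        linarith
      · have h1 : V t ≤ V 0 := hV.mono (Set.mem_Ici.mpr ht)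
          (Set.mem_Ici.mpr (by linarith)) (le_of_lt h0)
        have h2 : V 0 ≤ p/(d-r) + p/a := by
          have h3 := hV.growth 0 le_rfl
          rw [show d*(0:ℝ)+p = p by ring] at h3
          exact h3
        have h3 : c1 * (-(p/a)) ≤ c1 * t := mul_le_mul_of_nonneg_left ht hc1nn
        have hexp : c1 * (-(p/a)) = -(c1*(p/a)) := by ring
        rw [hc2def]
        linarith
    set τ := x₁ - x₀ with hτdef
    clear_value τ
    have hτpos : 0 < τ := by rw [hτdef]; linarith
    set C₀ := (c1 - k) * x₀ + c2 - A with hC₀def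
    clear_value C₀
    set M := |c1 - k|/τ + |C₀|/τ^2 with hMdef
    clear_value M
    have hMnn : 0 ≤ M := by
      rw [hMdef]
      exact add_nonneg (div_nonneg (abs_nonneg _) hτpos.le)
        (div_nonneg (abs_nonneg _) (by positivity))
    -- the test function
    set φ := fun t => A + k * t + M * (max (t - x₀) 0)^2 + N * (max (y - t) 0)^2 with hφdef
    clear_value φ
    have hφval : ∀ t, φ t = A + k * t + M * (max (t - x₀) 0)^2 + N * (max (y - t) 0)^2 :=
      fun t => by rw [hφdef]
    have hφC1 : ContDiff ℝ 1 φ := by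
      rw [hφdef]
      exact ((contDiff_const.add (contDiff_const.mul contDiff_id)).add
        (contDiff_const.mul (contDiff_reluSq.comp (contDiff_id.sub contDiff_const)))).add
        (contDiff_const.mul (contDiff_reluSq.comp (contDiff_const.sub contDiff_id)))
    have hmax1 : max (zs - x₀) 0 = 0 := max_eq_right (by linarith)
    have hmax2 : max (y - zs) 0 = 0 := max_eq_right (by linarith)
    have hφzs : φ zs = V zs := by
      rw [hφval, hmax1, hmax2, hAdef]; ring
    have hφder : HasDerivAt φ k zs := by
      have d1 : HasDerivAt (fun t : ℝ => A + k * t) k zs := by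
        simpa using ((hasDerivAt_id zs).const_mul k).const_add A
      have d2 : HasDerivAt (fun t : ℝ => max (t - x₀) 0 ^ 2) (2 * max (zs - x₀) 0) zs := by
        have h := (hasDerivAt_reluSq (zs - x₀)).comp zs ((hasDerivAt_id zs).sub_const x₀)
        simpa [Function.comp_def] using h
      have d3 : HasDerivAt (fun t : ℝ => max (y - t) 0 ^ 2) (2 * max (y - zs) 0 * (-1)) zs := by
        have h := (hasDerivAt_reluSq (y - zs)).comp zs ((hasDerivAt_id zs).const_sub y)
        simpa [Function.comp_def] using h
      have h := (d1.add (d2.const_mul M)).add (d3.const_mul N)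
      rw [hφdef]
      convert h using 1 <;> first | rfl | (rw [hmax1, hmax2]; ring)
    have hφderiv : deriv φ zs = k := hφder.deriv
    -- global max of V - φ at zs
    have hglob : ∀ ξ ∈ Set.Ici (-(p/a)), V ξ - φ ξ ≤ V zs - φ zs := by
      intro ξ hξ
      rw [hφzs, sub_self]
      rw [hφval]
      rcases le_or_gt ξ x₀ with hξx₀ | hξx₀
      · rcases le_or_gt y ξ with hyξ | hyξ
        · have e1 : max (ξ - x₀) 0 = 0 := max_eq_right (by linarith)
          have e2 : max (y - ξ) 0 = 0 := max_eq_right (by linarith)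
          have h1 := hwmax ξ ⟨hyξ, hξx₀⟩
          have hM0 : M * (max (ξ - x₀) 0)^2 = 0 := by rw [e1]; ring
          have hN0 : N * (max (y - ξ) 0)^2 = 0 := by rw [e2]; ring
          linarith only [h1, hM0, hN0]
        · have e1 : max (ξ - x₀) 0 = 0 := max_eq_right (by linarith)
          have e2 : max (y - ξ) 0 = y - ξ := max_eq_left (by linarith)
          have hslope := hV.slope ξ y hξ (le_of_lt hyξ)
          have hwy : V y - k * y + η ≤ A := hwyz
          have hM0 : M * (max (ξ - x₀) 0)^2 = 0 := by rw [e1]; ring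
          rw [e2]
          have hs : 0 < y - ξ := by linarith
          have hkey : (k-1)*(y-ξ) ≤ N*(y-ξ)^2 + η := by
            have hfac : 4*η*(N*(y-ξ)^2 + η - (k-1)*(y-ξ)) =
                ((k-1)*(y-ξ) - 2*η)^2 + 4*η*(y-ξ)^2 := by
              linear_combination (y-ξ)^2 * h4ηN
            have hnn : 0 ≤ 4*η*(N*(y-ξ)^2 + η - (k-1)*(y-ξ)) := by
              rw [hfac]
              exact add_nonneg (sq_nonneg _) (mul_nonneg (by linarith only [hηpos]) (sq_nonneg _))
            nlinarith only [hnn, hηpos]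
          have hexp1 : (k-1)*(y-ξ) = k*y - k*ξ - (y - ξ) := by ring
          linarith only [hslope, hwy, hkey, hexp1, hM0]
      · rcases le_or_gt ξ x₁ with hξx₁ | hξx₁
        · have e1 : max (ξ - x₀) 0 = ξ - x₀ := max_eq_left (by linarith)
          have e2 : max (y - ξ) 0 = 0 := max_eq_right (by linarith)
          have hVξ := hV1 ξ ⟨hξx₀, hξx₁⟩
          have hN0 : N * (max (y - ξ) 0)^2 = 0 := by rw [e2]; ring
          rw [e1]
          have hMsq : 0 ≤ M * (ξ - x₀)^2 := mul_nonneg hMnn (sq_nonneg _)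
          have hkk : 0 ≤ (k-1)*(ξ-x₀) := mul_nonneg (by linarith) (by linarith)
          have hexp3 : (k-1)*(ξ-x₀) = k*ξ - k*x₀ - ξ + x₀ := by ring
          linarith only [hVξ, hVx₀A, hMsq, hkk, hexp3, hN0]
        · have e1 : max (ξ - x₀) 0 = ξ - x₀ := max_eq_left (by linarith)
          have e2 : max (y - ξ) 0 = 0 := max_eq_right (by linarith)
          have hVb := hlinbd ξ hξ
          have htτ : τ ≤ ξ - x₀ := by rw [hτdef]; linarith
          have htpos : 0 < ξ - x₀ := lt_of_lt_of_le hτpos htτ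
          have key : (c1 - k) * (ξ - x₀) + C₀ ≤ M * (ξ - x₀)^2 := by
            have h1 : ξ - x₀ ≤ (ξ - x₀)^2/τ := by
              rw [le_div_iff₀ hτpos]
              have := mul_nonneg htpos.le (sub_nonneg.mpr htτ)
              nlinarith only [this]
            have h2 : (1:ℝ) ≤ (ξ - x₀)^2/τ^2 := by
              rw [le_div_iff₀ (by positivity)]
              have := mul_self_le_mul_self hτpos.le htτ
              nlinarith only [this]
            have h3 : |c1 - k| * (ξ - x₀) ≤ |c1 - k| * ((ξ - x₀)^2/τ) :=
              mul_le_mul_of_nonneg_left h1 (abs_nonneg _)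
            have h4 : |C₀| * 1 ≤ |C₀| * ((ξ - x₀)^2/τ^2) :=
              mul_le_mul_of_nonneg_left h2 (abs_nonneg _)
            have h5 : (c1 - k) * (ξ - x₀) ≤ |c1 - k| * (ξ - x₀) :=
              mul_le_mul_of_nonneg_right (le_abs_self _) (le_of_lt htpos)
            have h6 : C₀ ≤ |C₀| := le_abs_self _
            have h7 : M * (ξ - x₀)^2 = |c1 - k| * ((ξ - x₀)^2/τ) + |C₀| * ((ξ - x₀)^2/τ^2) := by
              rw [hMdef]; ring
            linarith only [h3, h4, h5, h6, h7]
          have hexpand : (c1 - k) * (ξ - x₀) + C₀ = c1*ξ - k*ξ + c2 - A := by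
            rw [hC₀def]; ring
          have hN0 : N * (max (y - ξ) 0)^2 = 0 := by rw [e2]; ring
          rw [e1]
          linarith only [key, hexpand, hVb, hN0]
    -- apply the viscosity subsolution property at zs
    have hsub := hV.visc.1 zs (Set.mem_Ioi.mpr hzsIoi) φ hφC1 hφzs hglob
    have hL : 0 ≤ Lphi p lam d r a mu V φ zs := by
      rcases le_max_iff.mp hsub with h | h
      · rw [hφderiv] at h; linarith
      · exact h
    have hLe : Lphi p lam d r a mu V φ zs =
        drift p r a zs * k - (lam+d)*V zs + lam * Iop p a mu V zs := by
      unfold Lphi; rw [hφderiv]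
    have hdk : drift p r a zs * k ≤ drift p r a x₀ * k :=
      mul_le_mul_of_nonneg_right (drift_mono p r a hr ha hzsx₀) (by linarith)
    have hIl : lam * Iop p a mu V zs ≤ lam * Iop p a mu V x₀ :=
      mul_le_mul_of_nonneg_left (Iop_mono p lam d r a ha mu V hV hzsIci hzsx₀) (le_of_lt hlam)
    have hVzs : (lam + d) * (V x₀ - V zs) < ζ := by
      have hdist := hρ (Set.mem_Ici.mpr hzsIci)
        (show dist zs x₀ < ρ by
          rw [Real.dist_eq, abs_of_nonpos (by linarith)]; linarith)
      rw [Real.dist_eq] at hdist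
      have h1 : V x₀ - V zs ≤ |V zs - V x₀| := by
        rw [abs_sub_comm]; exact le_abs_self _
      calc (lam+d) * (V x₀ - V zs) ≤ (lam+d) * |V zs - V x₀| :=
            mul_le_mul_of_nonneg_left h1 hld.le
        _ < (lam+d) * (ζ/(lam+d)) := mul_lt_mul_of_pos_left hdist hld
        _ = ζ := mul_div_cancel₀ _ (ne_of_gt hld)
    rw [hLe] at hL
    have hfin : k * drift p r a x₀ - (lam+d)*V x₀ + lam*Iop p a mu V x₀ = -ζ := by
      rw [hζdef]; ring
    have hcomm : drift p r a x₀ * k = k * drift p r a x₀ := mul_comm _ _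
    have hVexp : (lam+d)*(V x₀ - V zs) = (lam+d)*V x₀ - (lam+d)*V zs := by ring
    linarith only [hL, hdk, hcomm, hIl, hVzs, hVexp, hfin]
  -- left tendsto of the slope
  have hleft : Tendsto (slope V x₀) (nhdsWithin x₀ (Set.Iio x₀)) (nhds 1) := by
    rw [Metric.tendsto_nhds]
    intro ε hε
    have hGq : 0 < -(Gop p lam d r a mu V x₀) / (2 * drift p r a x₀) := by
      apply div_pos (by linarith) (by linarith)
    have hk1 : 1 < min (1 + ε/2) (1 + -(Gop p lam d r a mu V x₀) / (2 * drift p r a x₀)) :=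
      lt_min (by linarith) (by linarith)
    have hkL : (min (1 + ε/2) (1 + -(Gop p lam d r a mu V x₀) / (2 * drift p r a x₀))) *
        drift p r a x₀ - (lam + d) * V x₀ + lam * Iop p a mu V x₀ < 0 := by
      have hkle : min (1 + ε/2) (1 + -(Gop p lam d r a mu V x₀) / (2 * drift p r a x₀)) ≤
          1 + -(Gop p lam d r a mu V x₀) / (2 * drift p r a x₀) := min_le_right _ _
      have h1 : (min (1 + ε/2) (1 + -(Gop p lam d r a mu V x₀) / (2 * drift p r a x₀))) *
          drift p r a x₀ ≤ (1 + -(Gop p lam d r a mu V x₀) / (2 * drift p r a x₀)) *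
          drift p r a x₀ := mul_le_mul_of_nonneg_right hkle hc₀pos.le
      have hexp : (1 + -(Gop p lam d r a mu V x₀) / (2 * drift p r a x₀)) * drift p r a x₀ =
          drift p r a x₀ + -(Gop p lam d r a mu V x₀)/2 := by
        field_simp
      rw [hexp] at h1
      have hGneg' : drift p r a x₀ - (lam + d) * V x₀ + lam * Iop p a mu V x₀ < 0 := by
        rw [← hGdef]; exact hGneg
      linarith only [h1, hGneg', hGdef]
    have hlow : ∀ᶠ z in nhdsWithin x₀ (Set.Iio x₀), -(p/a) < z :=
      (eventually_gt_nhds hx₀').filter_mono nhdsWithin_le_nhds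
    have hup : ∀ᶠ z in nhdsWithin x₀ (Set.Iio x₀), z ∈ Set.Iio x₀ :=
      Filter.eventually_of_mem self_mem_nhdsWithin (fun z hz => hz)
    filter_upwards [claim _ hk1 hkL, hlow, hup] with z hz1 hz2 hz3
    have hneq : 0 < x₀ - z := by exact sub_pos.mpr hz3
    have heq : (V z - V x₀) / (z - x₀) = (V x₀ - V z) / (x₀ - z) := by
      have h2 : z - x₀ ≠ 0 := by intro hc; rw [sub_eq_zero] at hc; exact (ne_of_lt hz3) hc
      have h3 : x₀ - z ≠ 0 := ne_of_gt hneq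
      field_simp
      ring
    rw [slope_def_field, Real.dist_eq, heq]
    have hq1 : 1 ≤ (V x₀ - V z) / (x₀ - z) := by
      rw [le_div_iff₀ hneq]
      have := hV.slope z x₀ (le_of_lt hz2) (le_of_lt hz3)
      linarith
    have hq2 : (V x₀ - V z) / (x₀ - z) ≤ 1 + ε/2 := by
      rw [div_le_iff₀ hneq]
      have hkε : min (1 + ε/2) (1 + -(Gop p lam d r a mu V x₀) / (2 * drift p r a x₀)) ≤
          1 + ε/2 := min_le_left _ _
      nlinarith
    rw [abs_lt]
    constructor <;> linarith
  -- right tendsto of the slope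
  have hright : Tendsto (slope V x₀) (nhdsWithin x₀ (Set.Ioi x₀)) (nhds 1) := by
    refine tendsto_const_nhds.congr' ?_
    filter_upwards [Ioc_mem_nhdsGT_of_mem (Set.mem_Ico.mpr ⟨le_refl x₀, hlt⟩)] with z hz
    rw [slope_def_field, hV1 z hz]
    have h1 : z - x₀ ≠ 0 := ne_of_gt (sub_pos.mpr hz.1)
    field_simp
    ring
  have hDer : HasDerivAt V 1 x₀ := by
    rw [hasDerivAt_iff_tendsto_slope, ← nhdsLT_sup_nhdsGT, tendsto_sup]
    exact ⟨hleft, hright⟩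
  exact hnB ⟨hx₀, hDer.differentiableAt, hDer.deriv, hGneg⟩
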